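/- (Lemma 2, part (i)) Suppose Q = U · diag(d) · U⁻¹ for an invertible real 𝒴 × 𝒴 matrix U and a function d : 𝒴 → ℝ, and let H := U · diag(k ↦ if d(k) = 0 then 1 else 0) · U⁻¹ be the spectral projection onto the zero-eigenvalue eigenspace. Then for every function s : 𝒴 → ℝ, the limiting bias-corrected score s_∞ defined by s_∞(y) = ∑_{k ∈ 𝒴} s(k) H(k, y) (the row vector s multiplied by H) satisfies ∑_{y ∈ 𝒴} s_∞(y) f(y, α) = 0 for every α ∈ 𝒜. -/

import Mathlib

open MeasureTheory

/-- (Lemma 2, part (i)) If `Q = U * diag d * U⁻¹` and `H` is the spectral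
projection onto the zero-eigenvalue eigenspace, then for every initial score
`s` the limiting bias-corrected score `s_∞ = s ᵥ* H` satisfies the exact
moment condition `∑ y, s_∞ y * f y α = 0` for every `α`. -/
theorem stmt_10 {Y : Type*} [Fintype Y] [Nonempty Y] [DecidableEq Y]
    {A : Type*} [TopologicalSpace A] [MeasurableSpace A] [BorelSpace A]
    (μ : Measure A) [IsProbabilityMeasure μ] [μ.IsOpenPosMeasure]
    (f : Y → A → ℝ)
    (hmeas : ∀ y, Measurable (f y))
    (hcont : ∀ y, Continuous (f y))
    (hnonneg : ∀ y α, 0 ≤ f y α)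
    (hsum : ∀ α, ∑ y, f y α = 1)
    (p : Y → ℝ) (hp : ∀ y, p y = ∫ α, f y α ∂μ)
    (hppos : ∀ y, 0 < p y)
    (Q : Matrix Y Y ℝ)
    (hQ : ∀ yt y, Q yt y = (∫ α, f yt α * f y α ∂μ) / p y)
    (U : Matrix Y Y ℝ) (hU : IsUnit U.det)
    (d : Y → ℝ)
    (hQU : Q = U * Matrix.diagonal d * U⁻¹)
    (H : Matrix Y Y ℝ)
    (hH : H = U * Matrix.diagonal (fun k => if d k = 0 then (1 : ℝ) else 0) * U⁻¹) :
    ∀ s : Y → ℝ, ∀ α, ∑ y, (∑ k, s k * H k y) * f y α = 0 := by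
  intro s α₀
  -- H * Q = 0
  have hHQ : H * Q = 0 := by
    rw [hH, hQU]
    have h1 : U⁻¹ * (U * Matrix.diagonal d * U⁻¹)
        = Matrix.diagonal d * U⁻¹ := by
      rw [← Matrix.mul_assoc, ← Matrix.mul_assoc, Matrix.nonsing_inv_mul U hU,
        Matrix.one_mul]
    rw [Matrix.mul_assoc (U * _), h1, Matrix.mul_assoc U, ← Matrix.mul_assoc _ _ U⁻¹,
      Matrix.diagonal_mul_diagonal]
    have : (fun k => (if d k = 0 then (1 : ℝ) else 0) * d k) = fun _ => 0 := by
      funext k; by_cases h : d k = 0 <;> simp [h]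
    rw [this]
    simp [Matrix.diagonal_zero]
  set c : Y → ℝ := fun y => ∑ k, s k * H k y with hc
  have hcQ : ∀ y, ∑ yt, c yt * Q yt y = 0 := by
    intro y
    have : ∑ yt, c yt * Q yt y = ∑ k, s k * (H * Q) k y := by
      simp only [hc, Matrix.mul_apply, Finset.sum_mul, Finset.mul_sum, mul_assoc]
      exact Finset.sum_comm
    rw [this, hHQ]
    simp
  -- bounds and integrability
  have hb : ∀ y α, f y α ≤ 1 := by
    intro y α
    have h1 : f y α ≤ ∑ y', f y' α :=
      Finset.single_le_sum (fun i _ => hnonneg i α) (Finset.mem_univ y)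
    rw [hsum α] at h1; exact h1
  have hint : ∀ y z : Y, Integrable (fun α => f y α * f z α) μ := by
    intro y z
    apply Integrable.mono' (integrable_const (1 : ℝ))
      ((hmeas y).mul (hmeas z)).aestronglyMeasurable
    filter_upwards with a
    rw [Real.norm_eq_abs, Pi.mul_apply, abs_of_nonneg (mul_nonneg (hnonneg y a) (hnonneg z a))]
    nlinarith [hnonneg y a, hnonneg z a, hb y a, hb z a]
  -- ∫ f yt * f y = Q yt y * p y
  have hI : ∀ yt y, ∫ α, f yt α * f y α ∂μ = Q yt y * p y := by
    intro yt y
    rw [hQ yt y, div_mul_cancel₀ _ (hppos y).ne']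
  set g : A → ℝ := fun α => ∑ y, c y * f y α with hg
  have hgint : ∀ y, ∫ α, g α * f y α ∂μ = 0 := by
    intro y
    have heq : (fun α => g α * f y α) = fun α => ∑ yt, c yt * (f yt α * f y α) := by
      funext a; simp only [hg, Finset.sum_mul, mul_assoc]
    rw [heq, integral_finset_sum _ (fun yt _ => (hint yt y).const_mul (c yt))]
    have : ∀ yt, ∫ α, c yt * (f yt α * f y α) ∂μ = c yt * (Q yt y * p y) := by
      intro yt
      rw [integral_const_mul, hI yt y]
    simp only [this]
    have : ∑ yt, c yt * (Q yt y * p y) = (∑ yt, c yt * Q yt y) * p y := by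
      rw [Finset.sum_mul]; congr 1; funext yt; ring
    rw [this, hcQ y, zero_mul]
  have hgg : ∫ α, g α * g α ∂μ = 0 := by
    have heq : (fun α => g α * g α) = fun α => ∑ y, c y * (f y α * g α) := by
      funext a
      simp only [hg]
      rw [Finset.sum_mul]
      congr 1; funext y; ring
    have hintg : ∀ y, Integrable (fun α => c y * (f y α * g α)) μ := by
      intro y
      have : (fun α => c y * (f y α * g α)) =
          fun α => ∑ yt, c y * c yt * (f y α * f yt α) := by
        funext a
        simp only [hg, Finset.mul_sum]
        congr 1; funext yt; ring
      rw [this]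
      exact integrable_finset_sum _ (fun yt _ => (hint y yt).const_mul _)
    rw [heq, integral_finset_sum _ (fun y _ => hintg y)]
    have : ∀ y, ∫ α, c y * (f y α * g α) ∂μ = c y * ∫ α, g α * f y α ∂μ := by
      intro y
      simp_rw [mul_comm (f y _)]
      rw [integral_const_mul]
    simp only [this, hgint, mul_zero, Finset.sum_const_zero]
  have hgcont : Continuous g := by
    apply continuous_finset_sum
    intro y _
    exact continuous_const.mul (hcont y)
  have hggint : Integrable (fun α => g α * g α) μ := by
    have : (fun α => g α * g α) = fun α => ∑ y, ∑ yt, c y * c yt * (f y α * f yt α) := by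
      funext a
      simp only [hg, Finset.sum_mul, Finset.mul_sum]
      congr 1; funext y; congr 1; funext yt; ring
    rw [this]
    exact integrable_finset_sum _ (fun y _ =>
      integrable_finset_sum _ (fun yt _ => (hint y yt).const_mul _))
  have hae : (fun α => g α * g α) =ᵐ[μ] 0 :=
    (integral_eq_zero_iff_of_nonneg (fun α => mul_self_nonneg (g α)) hggint).mp hgg
  have heq0 : (fun α => g α * g α) = 0 :=
    ((hgcont.mul hgcont).ae_eq_iff_eq μ continuous_const).mp hae
  have : g α₀ = 0 := by
    have := congrFun heq0 α₀
    exact mul_self_eq_zero.mp this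
  simpa [hg, hc] using this
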